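/- Let X be a real symmetric p×p matrix with spectral decomposition X = V D Vᵀ, where V is a p×p orthogonal matrix and D is diagonal with decreasing diagonal entries d₁ ≥ d₂ ≥ … ≥ d_p. Let 1 ≤ k ≤ p and let V_k denote the p×k matrix formed by the first k columns of V (eigenvectors associated with the k largest eigenvalues of X). Then for every real symmetric p×p matrix P satisfying P² = P and rank(P) = k, one has ‖X − V_k V_kᵀ‖² ≤ ‖X − P‖². In other words, V_k V_kᵀ minimizes the squared Frobenius distance from X over the Grassmann manifold of rank-k orthogonal projectors. -/

import Mathlib

open Matrix

/-- Squared Frobenius norm of a real matrix: `‖M‖² = tr(MᵀM)`. -/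
noncomputable def frobSq {p q : ℕ} (M : Matrix (Fin p) (Fin q) ℝ) : ℝ :=
  Matrix.trace (Mᵀ * M)

lemma trace_idem {n : ℕ} (P : Matrix (Fin n) (Fin n) ℝ) (hPs : Pᵀ = P) (hPP : P * P = P) :
    Matrix.trace P = (P.rank : ℝ) := by
  have hH : P.IsHermitian := by
    rwa [Matrix.IsHermitian, Matrix.conjTranspose_eq_transpose_of_trivial]
  set f : Fin n → ℝ := RCLike.ofReal ∘ hH.eigenvalues with hf
  set U : Matrix (Fin n) (Fin n) ℝ := (hH.eigenvectorUnitary : Matrix (Fin n) (Fin n) ℝ) with hU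
  have hU1 : U * star U = 1 := (Matrix.mem_unitaryGroup_iff).mp hH.eigenvectorUnitary.2
  have hU2 : star U * U = 1 := (Matrix.mem_unitaryGroup_iff').mp hH.eigenvectorUnitary.2
  have hdiag : star U * P * U = Matrix.diagonal f := by
    have := hH.conjStarAlgAut_star_eigenvectorUnitary; rw [Unitary.conjStarAlgAut_star_apply] at this; exact this
  have hidem : Matrix.diagonal f * Matrix.diagonal f = Matrix.diagonal f := by
    rw [← hdiag]
    calc (star U * P * U) * (star U * P * U)
        = star U * P * ((U * star U) * (P * U)) := by simp [mul_assoc]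
      _ = star U * ((P * P) * U) := by rw [hU1, one_mul]; simp [mul_assoc]
      _ = star U * P * U := by rw [hPP, mul_assoc]
  have h01 : ∀ i, hH.eigenvalues i = 0 ∨ hH.eigenvalues i = 1 := by
    intro i
    have h := congrFun (congrFun hidem i) i
    simp [Matrix.mul_apply, Matrix.diagonal_apply, Finset.sum_ite_eq, hf] at h
    have h2 : hH.eigenvalues i * (hH.eigenvalues i - 1) = 0 := by linear_combination h
    rcases mul_eq_zero.mp h2 with h3 | h3
    · exact Or.inl h3
    · exact Or.inr (by linarith)
  have htr : Matrix.trace P = ∑ i, hH.eigenvalues i := by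
    conv_lhs => rw [hH.spectral_theorem]
    rw [Unitary.conjStarAlgAut_apply, Matrix.trace_mul_comm, ← mul_assoc, hU2, one_mul, Matrix.trace_diagonal]
    rfl
  have hrank : P.rank = Fintype.card {i // hH.eigenvalues i ≠ 0} := hH.rank_eq_card_non_zero_eigs
  rw [htr, hrank, Fintype.card_subtype, Finset.card_filter]
  push_cast
  apply Finset.sum_congr rfl
  intro i _
  rcases h01 i with h | h <;> simp [h]

lemma trace_mul_diag {p : ℕ} (D M : Matrix (Fin p) (Fin p) ℝ) (hD : D.IsDiag) :
    Matrix.trace (M * D) = ∑ i, D i i * M i i := by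
  rw [Matrix.trace]
  apply Finset.sum_congr rfl
  intro i _
  rw [Matrix.diag_apply, Matrix.mul_apply, Finset.sum_eq_single i]
  · ring
  · intro j _ hj
    rw [hD hj, mul_zero]
  · simp

/-- **Projection on the Grassmann manifold.**
If `X = V * D * Vᵀ` is a spectral decomposition of the symmetric matrix `X`
(`V` orthogonal, `D` diagonal with decreasing diagonal entries), and `Vk` is the
`p×k` matrix of the first `k` columns of `V`, then `Vk * Vkᵀ` minimizes the
squared Frobenius distance from `X` over the set of symmetric rank-`k`
orthogonal projectors. -/
theorem grassmann_projection {p k : ℕ} (hk1 : 1 ≤ k) (hkp : k ≤ p)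
    (X V D : Matrix (Fin p) (Fin p) ℝ)
    (hX : Xᵀ = X)
    (hV : Vᵀ * V = 1)
    (hD : D.IsDiag)
    (hdec : ∀ i j : Fin p, i ≤ j → D j j ≤ D i i)
    (hXVD : X = V * D * Vᵀ)
    (Vk : Matrix (Fin p) (Fin k) ℝ)
    (hVk : Vk = V.submatrix id (Fin.castLE hkp))
    (P : Matrix (Fin p) (Fin p) ℝ)
    (hP : Pᵀ = P) (hPproj : P * P = P) (hPrank : P.rank = k) :
    frobSq (X - Vk * Vkᵀ) ≤ frobSq (X - P) := by
  have hVV : V * Vᵀ = 1 := mul_eq_one_comm.mp hV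
  set R : Matrix (Fin p) (Fin p) ℝ := Vk * Vkᵀ with hR
  set Q : Matrix (Fin p) (Fin p) ℝ := Vᵀ * P * V with hQ
  have hJ : Vᵀ * Vk = (1 : Matrix (Fin p) (Fin p) ℝ).submatrix id (Fin.castLE hkp) := by
    ext i a
    have h := congrFun (congrFun hV i) (Fin.castLE hkp a)
    simp only [Matrix.mul_apply, hVk, Matrix.transpose_apply, Matrix.submatrix_apply] at h ⊢; exact h
  have hVkVk : Vkᵀ * Vk = (1 : Matrix (Fin k) (Fin k) ℝ) := by
    ext a b
    have h := congrFun (congrFun hV (Fin.castLE hkp a)) (Fin.castLE hkp b)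
    simp only [Matrix.mul_apply, hVk, Matrix.transpose_apply, Matrix.submatrix_apply, id] at h ⊢
    rw [h, Matrix.one_apply, Matrix.one_apply]
    simp [Fin.castLE_inj]
  have hRsym : Rᵀ = R := by rw [hR, Matrix.transpose_mul, Matrix.transpose_transpose]
  have hRR : R * R = R := by
    rw [hR]
    calc Vk * Vkᵀ * (Vk * Vkᵀ) = Vk * ((Vkᵀ * Vk) * Vkᵀ) := by simp [Matrix.mul_assoc]
      _ = Vk * Vkᵀ := by rw [hVkVk, Matrix.one_mul]
  have htrR : Matrix.trace R = (k : ℝ) := by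
    rw [hR, Matrix.trace_mul_comm, hVkVk, Matrix.trace_one]
    simp
  have htrP : Matrix.trace P = (k : ℝ) := by rw [trace_idem P hP hPproj, hPrank]
  have hQsymM : Qᵀ = Q := by
    rw [hQ, Matrix.transpose_mul, Matrix.transpose_mul, Matrix.transpose_transpose, hP,
      Matrix.mul_assoc]
  have hQsym : ∀ i j, Q j i = Q i j := fun i j => congrFun (congrFun hQsymM i) j
  have hQQ : Q * Q = Q := by
    rw [hQ]
    calc Vᵀ * P * V * (Vᵀ * P * V) = Vᵀ * P * ((V * Vᵀ) * (P * V)) := by simp [Matrix.mul_assoc]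
      _ = Vᵀ * ((P * P) * V) := by rw [hVV, one_mul]; simp [Matrix.mul_assoc]
      _ = Vᵀ * P * V := by rw [hPproj, Matrix.mul_assoc]
  have hQdiag : ∀ i, Q i i = ∑ j, (Q i j) ^ 2 := by
    intro i
    conv_lhs => rw [← hQQ]
    rw [Matrix.mul_apply]
    apply Finset.sum_congr rfl
    intro j _
    rw [hQsym i j, sq]
  have hQ0 : ∀ i, 0 ≤ Q i i := fun i =>
    (hQdiag i) ▸ Finset.sum_nonneg (fun j _ => sq_nonneg _)
  have hQ1 : ∀ i, Q i i ≤ 1 := by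
    intro i
    have h := Finset.single_le_sum (f := fun j => (Q i j) ^ 2)
      (fun j _ => sq_nonneg _) (Finset.mem_univ i)
    have h' : (Q i i) ^ 2 ≤ ∑ j, (Q i j) ^ 2 := h
    rw [← hQdiag i] at h'
    nlinarith [hQ0 i]
  have htrQ : ∑ i, Q i i = (k : ℝ) := by
    have h : Matrix.trace Q = Matrix.trace P := by
      rw [hQ, Matrix.trace_mul_comm, ← Matrix.mul_assoc, hVV, one_mul]
    rw [htrP] at h
    simpa [Matrix.trace, Matrix.diag] using h
  set G : Matrix (Fin p) (Fin p) ℝ := Vᵀ * R * V with hG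
  have hGJ : G = (Vᵀ * Vk) * (Vᵀ * Vk)ᵀ := by
    rw [hG, hR, Matrix.transpose_mul, Matrix.transpose_transpose]
    simp [Matrix.mul_assoc]
  have hGdiag : ∀ i, G i i = if (i : ℕ) < k then 1 else 0 := by
    intro i
    rw [hGJ, hJ, Matrix.mul_apply]
    by_cases hi : (i : ℕ) < k
    · rw [if_pos hi, Finset.sum_eq_single ⟨(i : ℕ), hi⟩]
      · have : Fin.castLE hkp ⟨(i : ℕ), hi⟩ = i := by ext; rfl
        simp [Matrix.one_apply, this]
      · intro b _ hb
        have hne : i ≠ Fin.castLE hkp b := by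
          intro h
          apply hb
          ext
          simpa using congrArg Fin.val h.symm
        simp [Matrix.one_apply, hne]
      · simp
    · rw [if_neg hi]
      apply Finset.sum_eq_zero
      intro b _
      have hne : i ≠ Fin.castLE hkp b := by
        intro h
        apply hi
        rw [h]
        exact b.isLt
      simp [Matrix.one_apply, hne]
  have htrG : ∑ i, G i i = (k : ℝ) := by
    have hJJ : (Vᵀ * Vk)ᵀ * (Vᵀ * Vk) = (1 : Matrix (Fin k) (Fin k) ℝ) := by
      rw [Matrix.transpose_mul, Matrix.transpose_transpose, Matrix.mul_assoc,
        ← Matrix.mul_assoc V Vᵀ Vk, hVV, Matrix.one_mul, hVkVk]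
    have h : Matrix.trace G = (k : ℝ) := by
      rw [hGJ, Matrix.trace_mul_comm, hJJ, Matrix.trace_one]
      simp
    simpa [Matrix.trace, Matrix.diag] using h
  have hXPtr : Matrix.trace (X * P) = ∑ i, D i i * Q i i := by
    rw [hXVD]
    calc Matrix.trace (V * D * Vᵀ * P) = Matrix.trace ((V * D) * (Vᵀ * P)) := by
          rw [Matrix.mul_assoc]
      _ = Matrix.trace ((Vᵀ * P) * (V * D)) := Matrix.trace_mul_comm _ _
      _ = Matrix.trace (Q * D) := by rw [hQ, Matrix.mul_assoc (Vᵀ * P) V D]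
      _ = ∑ i, D i i * Q i i := trace_mul_diag D Q hD
  have hXRtr : Matrix.trace (X * R) = ∑ i, D i i * G i i := by
    rw [hXVD]
    calc Matrix.trace (V * D * Vᵀ * R) = Matrix.trace ((V * D) * (Vᵀ * R)) := by
          rw [Matrix.mul_assoc]
      _ = Matrix.trace ((Vᵀ * R) * (V * D)) := Matrix.trace_mul_comm _ _
      _ = Matrix.trace (G * D) := by rw [hG, Matrix.mul_assoc (Vᵀ * R) V D]
      _ = ∑ i, D i i * G i i := trace_mul_diag D G hD
  have hm : k - 1 < p := by omega
  set c : ℝ := D ⟨k - 1, hm⟩ ⟨k - 1, hm⟩ with hc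
  have key : ∑ i, D i i * Q i i ≤ ∑ i, D i i * G i i := by
    have step : ∀ i : Fin p, (D i i - c) * Q i i ≤ (D i i - c) * G i i := by
      intro i
      rw [hGdiag i]
      by_cases hi : (i : ℕ) < k
      · rw [if_pos hi, mul_one]
        have hle : c ≤ D i i := hdec i ⟨k - 1, hm⟩ (by simp [Fin.le_def]; omega)
        nlinarith [hQ1 i, hQ0 i]
      · rw [if_neg hi, mul_zero]
        have hle : D i i ≤ c := hdec ⟨k - 1, hm⟩ i (by simp [Fin.le_def]; omega)
        exact mul_nonpos_of_nonpos_of_nonneg (by linarith) (hQ0 i)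
    have hsum : ∑ i, (D i i - c) * Q i i ≤ ∑ i, (D i i - c) * G i i :=
      Finset.sum_le_sum (fun i _ => step i)
    have e1 : ∑ i, (D i i - c) * Q i i = (∑ i, D i i * Q i i) - c * ∑ i, Q i i := by
      rw [Finset.mul_sum, ← Finset.sum_sub_distrib]
      apply Finset.sum_congr rfl
      intro i _
      ring
    have e2 : ∑ i, (D i i - c) * G i i = (∑ i, D i i * G i i) - c * ∑ i, G i i := by
      rw [Finset.mul_sum, ← Finset.sum_sub_distrib]
      apply Finset.sum_congr rfl
      intro i _
      ring
    rw [e1, e2, htrQ, htrG] at hsum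
    linarith
  have expand : ∀ M : Matrix (Fin p) (Fin p) ℝ, Mᵀ = M → M * M = M →
      frobSq (X - M) = Matrix.trace (X * X) - 2 * Matrix.trace (X * M) + Matrix.trace M := by
    intro M hMs hMM
    rw [frobSq, Matrix.transpose_sub, hX, hMs, Matrix.sub_mul, Matrix.mul_sub, Matrix.mul_sub,
      Matrix.trace_sub, Matrix.trace_sub, Matrix.trace_sub, hMM]
    have h := Matrix.trace_mul_comm M X
    linarith
  rw [expand P hP hPproj, expand R hRsym hRR, hXPtr, hXRtr, htrR, htrP]
  linarith
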